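/- If n ≥ 2k−1 ≥ 3, the (k−1)-tight k-uniform cycle C^(k)_n(k−1), whose edges are all cyclic intervals of length k in {1,...,n}, has infection number 2. -/

import Mathlib

/-- A (finite) hypergraph: a vertex set and a set of edges, each edge a subset
of the vertex set. -/
structure FinHypergraph (α : Type*) [DecidableEq α] where
  verts : Finset α
  edges : Finset (Finset α)
  edge_sub : ∀ e ∈ edges, e ⊆ verts

namespace FinHypergraph

variable {α : Type*} [DecidableEq α]

/-- The `m`-infection closure of an initially infected set `W`: a set `A` of
infected vertices with `m ≤ |A|` can infect an edge `E ⊇ A` provided every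
vertex `u` outside `E` such that `A ∪ {u}` is contained in some edge is
already infected; then every vertex of `E` becomes infected. -/
inductive InfectedFromM (H : FinHypergraph α) (m : ℕ) (W : Finset α) : α → Prop
  | init {v : α} (hv : v ∈ W) : InfectedFromM H m W v
  | spread {A E : Finset α} {v : α}
      (hcard : m ≤ A.card) (hAE : A ⊆ E) (hE : E ∈ H.edges)
      (hAinf : ∀ a ∈ A, InfectedFromM H m W a)
      (hblock : ∀ u ∈ H.verts, u ∉ E → (∃ E' ∈ H.edges, A ∪ {u} ⊆ E') →
        InfectedFromM H m W u)
      (hv : v ∈ E) : InfectedFromM H m W v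

/-- `W` is an `m`-infection set if starting from `W` every vertex gets infected. -/
def IsInfectionSetM (H : FinHypergraph α) (m : ℕ) (W : Finset α) : Prop :=
  W ⊆ H.verts ∧ ∀ v ∈ H.verts, InfectedFromM H m W v

/-- The `m`-infection number: minimum size of an `m`-infection set. -/
noncomputable def infectionNumberM (H : FinHypergraph α) (m : ℕ) : ℕ :=
  sInf {n | ∃ W : Finset α, IsInfectionSetM H m W ∧ W.card = n}

/-- Ordinary infection (`m = 1`, i.e. the infecting set is nonempty). -/
def InfectedFrom (H : FinHypergraph α) : Finset α → α → Prop := InfectedFromM H 1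

def IsInfectionSet (H : FinHypergraph α) : Finset α → Prop := IsInfectionSetM H 1

noncomputable def infectionNumber (H : FinHypergraph α) : ℕ := infectionNumberM H 1

/-- The degree of a vertex: the number of edges containing it. -/
def degree (H : FinHypergraph α) (v : α) : ℕ := (H.edges.filter (fun e => v ∈ e)).card

/-- Two vertices are adjacent if some edge contains both. -/
def Adj (H : FinHypergraph α) (u v : α) : Prop := ∃ e ∈ H.edges, u ∈ e ∧ v ∈ e

/-- A hypergraph is connected if any two vertices are joined by a chain of
adjacencies. -/
def Connected (H : FinHypergraph α) : Prop :=
  ∀ u ∈ H.verts, ∀ v ∈ H.verts, Relation.ReflTransGen H.Adj u v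

/-- A hypergraph is reduced if no edge is contained in another edge. -/
def Reduced (H : FinHypergraph α) : Prop :=
  ∀ e ∈ H.edges, ∀ f ∈ H.edges, e ⊆ f → e = f

open Classical in
/-- The connected component of a vertex. -/
noncomputable def component (H : FinHypergraph α) (v : α) : Finset α :=
  H.verts.filter (fun u => Relation.ReflTransGen H.Adj v u)

/-- The sub-hypergraph induced by a vertex set `S`. -/
def restrict (H : FinHypergraph α) (S : Finset α) : FinHypergraph α where
  verts := H.verts ∩ S
  edges := H.edges.filter (fun e => e ⊆ S)
  edge_sub := fun e he => by
    simp only [Finset.mem_filter] at he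
    exact Finset.subset_inter (H.edge_sub e he.1) he.2

end FinHypergraph

/-- The `(k-1)`-tight `k`-uniform cycle `C^(k)_n(k-1)`: vertex set `{0,…,n-1}`
viewed cyclically, with edges all cyclic intervals `{j, j+1, …, j+k-1}` (mod `n`). -/
def cyclicIntervalHypergraph (n k : ℕ) : FinHypergraph ℕ where
  verts := Finset.range n
  edges := (Finset.range n).image
    (fun j => (Finset.range k).image (fun a => (j + a) % n))
  edge_sub := by
    intro e he
    simp only [Finset.mem_image, Finset.mem_range] at he
    obtain ⟨j, hj, rfl⟩ := he
    intro x hx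
    simp only [Finset.mem_image, Finset.mem_range] at hx
    obtain ⟨a, _, rfl⟩ := hx
    exact Finset.mem_range.mpr (Nat.mod_lt _ (Nat.lt_of_le_of_lt (Nat.zero_le j) hj))

section CIHHelpers

private def Ej (n k j : ℕ) : Finset ℕ := (Finset.range k).image (fun a => (j + a) % n)

private lemma mem_Ej {n k j x : ℕ} : x ∈ Ej n k j ↔ ∃ a < k, (j + a) % n = x := by
  simp [Ej]

private lemma Ej_mem_edges {n k j : ℕ} (hj : j < n) :
    Ej n k j ∈ (cyclicIntervalHypergraph n k).edges := by
  simp only [cyclicIntervalHypergraph, Finset.mem_image, Finset.mem_range]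
  exact ⟨j, hj, rfl⟩

private lemma edges_iff {n k : ℕ} {E : Finset ℕ} :
    E ∈ (cyclicIntervalHypergraph n k).edges ↔ ∃ j < n, E = Ej n k j := by
  constructor
  · intro h
    simp only [cyclicIntervalHypergraph, Finset.mem_image, Finset.mem_range] at h
    obtain ⟨j, hj, hE⟩ := h
    exact ⟨j, hj, hE.symm⟩
  · rintro ⟨j, hj, rfl⟩; exact Ej_mem_edges hj

private lemma verts_eq {n k : ℕ} : (cyclicIntervalHypergraph n k).verts = Finset.range n := rfl

private lemma mod2 {n x : ℕ} (_hn : 0 < n) (hx : x < 2 * n) : x % n = x ∨ x % n + n = x := by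
  rcases Nat.lt_or_ge x n with h | h
  · left; exact Nat.mod_eq_of_lt h
  · right
    have h2 : x % n = x - n := by
      rw [Nat.mod_eq_sub_mod h, Nat.mod_eq_of_lt (by omega)]
    omega

private lemma add_cancel_mod {n j x y : ℕ} (h : (j + x) % n = (j + y) % n) :
    x % n = y % n :=
  Nat.ModEq.add_left_cancel' j h

private lemma step_lemma {n k : ℕ} (hk2 : 2 ≤ k) (hnk : 2 * k - 1 ≤ n) {W : Finset ℕ}
    {s : ℕ} (hs : s < n)
    (hinf : ∀ a < k, (cyclicIntervalHypergraph n k).InfectedFromM 1 W ((s + a) % n)) :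
    ∀ a < k, (cyclicIntervalHypergraph n k).InfectedFromM 1 W ((s + 1 + a) % n) := by
  have hkn : k < n := by omega
  have hn0 : 0 < n := by omega
  set m := (s + 1) % n with hm
  have hmn : m < n := Nat.mod_lt _ hn0
  intro a ha
  have hmem : (s + 1 + a) % n ∈ Ej n k m := by
    rw [mem_Ej]
    exact ⟨a, ha, by rw [hm, Nat.mod_add_mod]⟩
  refine FinHypergraph.InfectedFromM.spread
    (A := (Finset.range (k - 1)).image (fun b => (s + 1 + b) % n))
    (E := Ej n k m) ?_ ?_ (Ej_mem_edges hmn) ?_ ?_ hmem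
  · refine Finset.card_pos.mpr ⟨(s + 1 + 0) % n, ?_⟩
    exact Finset.mem_image.mpr ⟨0, Finset.mem_range.mpr (by omega), rfl⟩
  · intro x hx
    simp only [Finset.mem_image, Finset.mem_range] at hx
    obtain ⟨b, hb, rfl⟩ := hx
    exact mem_Ej.mpr ⟨b, by omega, by rw [hm, Nat.mod_add_mod]⟩
  · intro x hx
    simp only [Finset.mem_image, Finset.mem_range] at hx
    obtain ⟨b, hb, rfl⟩ := hx
    rw [show s + 1 + b = s + (b + 1) from by omega]
    exact hinf (b + 1) (by omega)
  · intro u hu hune hex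
    obtain ⟨E', hE', hsub⟩ := hex
    obtain ⟨j, hj, rfl⟩ := edges_iff.mp hE'
    have hA0 : (s + 1 + 0) % n ∈ Ej n k j :=
      hsub (Finset.mem_union_left _
        (Finset.mem_image.mpr ⟨0, Finset.mem_range.mpr (by omega), rfl⟩))
    have hA1 : (s + 1 + (k - 2)) % n ∈ Ej n k j :=
      hsub (Finset.mem_union_left _
        (Finset.mem_image.mpr ⟨k - 2, Finset.mem_range.mpr (by omega), rfl⟩))
    have hu' : u ∈ Ej n k j :=
      hsub (Finset.mem_union_right _ (Finset.mem_singleton_self u))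
    obtain ⟨c0, hc0k, hc0⟩ := mem_Ej.mp hA0
    obtain ⟨c1, hc1k, hc1⟩ := mem_Ej.mp hA1
    rw [Nat.add_zero] at hc0
    set w1 := (s + 1 + (k - 2)) % n with hw1def
    have hw1n : w1 < n := Nat.mod_lt _ hn0
    have hw1 : w1 = (m + (k - 2)) % n := by rw [hw1def, hm, Nat.mod_add_mod]
    have e1 : j + c0 = m ∨ j + c0 = m + n := by
      rcases mod2 hn0 (show j + c0 < 2 * n by omega) with h | h <;> omega
    have e2 : w1 = m + (k - 2) ∨ w1 + n = m + (k - 2) := by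
      have h := mod2 hn0 (show m + (k - 2) < 2 * n by omega)
      rw [← hw1] at h
      exact h
    have e3 : j + c1 = w1 ∨ j + c1 = w1 + n := by
      rcases mod2 hn0 (show j + c1 < 2 * n by omega) with h | h <;> omega
    have e4 : m = s + 1 ∨ m + n = s + 1 := by
      rcases mod2 hn0 (show s + 1 < 2 * n by omega) with h | h <;> omega
    have hjms : j = m ∨ j = s := by omega
    rcases hjms with rfl | rfl
    · exact absurd hu' hune
    · obtain ⟨c, hck, hcu⟩ := mem_Ej.mp hu'
      rcases c with _ | c'
      · have h0 := hinf 0 (by omega)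
        rw [Nat.add_zero] at hcu h0
        rw [Nat.mod_eq_of_lt (by omega : _ < n)] at hcu h0
        rwa [hcu] at h0
      · exfalso
        apply hune
        refine mem_Ej.mpr ⟨c', by omega, ?_⟩
        rw [hm, Nat.mod_add_mod, show j + 1 + c' = j + (c' + 1) from by omega, hcu]

private lemma base_lemma {n k : ℕ} (hk2 : 2 ≤ k) (hnk : 2 * k - 1 ≤ n) :
    ∀ a < k, (cyclicIntervalHypergraph n k).InfectedFromM 1 {0, k - 1} ((0 + a) % n) := by
  have hkn : k < n := by omega
  have hn0 : 0 < n := by omega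
  intro a ha
  have hmem : (0 + a) % n ∈ Ej n k 0 := mem_Ej.mpr ⟨a, ha, rfl⟩
  refine FinHypergraph.InfectedFromM.spread (A := {0, k - 1}) (E := Ej n k 0)
    ?_ ?_ (Ej_mem_edges hn0) ?_ ?_ hmem
  · refine Finset.card_pos.mpr ⟨0, by simp⟩
  · intro x hx
    rcases Finset.mem_insert.mp hx with rfl | hx
    · exact mem_Ej.mpr ⟨0, by omega, by simp⟩
    · rw [Finset.mem_singleton.mp hx]
      exact mem_Ej.mpr ⟨k - 1, by omega, by rw [Nat.zero_add, Nat.mod_eq_of_lt (by omega)]⟩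
  · intro x hx
    exact FinHypergraph.InfectedFromM.init hx
  · intro u hu hune hex
    exfalso
    obtain ⟨E', hE', hsub⟩ := hex
    obtain ⟨j, hj, rfl⟩ := edges_iff.mp hE'
    have h0 : (0 : ℕ) ∈ Ej n k j :=
      hsub (Finset.mem_union_left _ (Finset.mem_insert_self 0 _))
    have hk1 : k - 1 ∈ Ej n k j :=
      hsub (Finset.mem_union_left _ (Finset.mem_insert_of_mem (Finset.mem_singleton_self _)))
    have hu' : u ∈ Ej n k j :=
      hsub (Finset.mem_union_right _ (Finset.mem_singleton_self u))
    obtain ⟨a1, ha1, he1⟩ := mem_Ej.mp h0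
    obtain ⟨b1, hb1, he2⟩ := mem_Ej.mp hk1
    have f1 : j + a1 = 0 ∨ j + a1 = n := by
      rcases mod2 hn0 (show j + a1 < 2 * n by omega) with h | h <;> omega
    have f2 : j + b1 = k - 1 ∨ j + b1 = n + (k - 1) := by
      rcases mod2 hn0 (show j + b1 < 2 * n by omega) with h | h <;> omega
    have hj0 : j = 0 := by omega
    subst hj0
    exact hune hu'

private lemma cover_lemma {n k : ℕ} (hk2 : 2 ≤ k) (hnk : 2 * k - 1 ≤ n) :
    ∀ t, ∀ a < k,
      (cyclicIntervalHypergraph n k).InfectedFromM 1 {0, k - 1} ((t + a) % n) := by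
  have hn0 : 0 < n := by omega
  intro t
  induction t with
  | zero => exact base_lemma hk2 hnk
  | succ t ih =>
    intro a ha
    have hstep := step_lemma hk2 hnk (Nat.mod_lt t hn0)
      (fun b hb => by rw [Nat.mod_add_mod]; exact ih b hb) a ha
    rwa [Nat.add_assoc, Nat.mod_add_mod, ← Nat.add_assoc] at hstep

private lemma empty_no {n k v : ℕ}
    (h : (cyclicIntervalHypergraph n k).InfectedFromM 1 ∅ v) : False := by
  induction h with
  | init hv => simp at hv
  | spread hcard hAE hE hAinf hblock hv ihA ihB =>
    obtain ⟨a, ha⟩ := Finset.card_pos.mp hcard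
    exact ihA a ha

private lemma single_no {n k w v : ℕ} (hk2 : 2 ≤ k) (hnk : 2 * k - 1 ≤ n)
    (h : (cyclicIntervalHypergraph n k).InfectedFromM 1 {w} v) : v = w := by
  have hkn : k < n := by omega
  have hn0 : 0 < n := by omega
  induction h with
  | init hv => simpa using hv
  | spread hcard hAE hE hAinf hblock hv ihA ihB =>
    rename_i A E0 v0
    exfalso
    obtain ⟨j, hj, rfl⟩ := edges_iff.mp hE
    obtain ⟨a₀, ha₀⟩ := Finset.card_pos.mp hcard
    have hwA := ha₀
    rw [ihA a₀ ha₀] at hwA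
    have hwE : w ∈ Ej n k j := hAE hwA
    obtain ⟨a0, ha0k, hwa⟩ := mem_Ej.mp hwE
    have hwn : w < n := by rw [← hwa]; exact Nat.mod_lt _ hn0
    rcases Nat.eq_zero_or_pos a0 with h0 | hpos
    · -- use u = (j + (n-1)) % n
      have hun : (j + (n - 1)) % n < n := Nat.mod_lt _ hn0
      have huE : (j + (n - 1)) % n ∉ Ej n k j := by
        intro hmem
        obtain ⟨b, hb, hbe⟩ := mem_Ej.mp hmem
        have hbb := add_cancel_mod (n := n) (j := j) (x := b) (y := n - 1) hbe
        rw [Nat.mod_eq_of_lt (by omega), Nat.mod_eq_of_lt (by omega)] at hbb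
        omega
      have hsub : A ∪ {(j + (n - 1)) % n} ⊆ Ej n k ((j + (n - 1)) % n) := by
        intro x hx
        rcases Finset.mem_union.mp hx with hx | hx
        · rw [ihA x hx]
          refine mem_Ej.mpr ⟨1, by omega, ?_⟩
          rw [Nat.mod_add_mod, show j + (n - 1) + 1 = j + n from by omega,
            Nat.add_mod_right, ← hwa, h0, Nat.add_zero]
        · rw [Finset.mem_singleton.mp hx]
          exact mem_Ej.mpr ⟨0, by omega, by rw [Nat.add_zero, Nat.mod_mod_of_dvd _ dvd_rfl]⟩
      have hueq := ihB _ (by rw [verts_eq]; exact Finset.mem_range.mpr hun) huE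
        ⟨_, Ej_mem_edges hun, hsub⟩
      rw [hueq] at huE
      exact huE hwE
    · -- use u = (j + k) % n
      have hun : (j + k) % n < n := Nat.mod_lt _ hn0
      have huE : (j + k) % n ∉ Ej n k j := by
        intro hmem
        obtain ⟨b, hb, hbe⟩ := mem_Ej.mp hmem
        have hbb := add_cancel_mod (n := n) (j := j) (x := b) (y := k) hbe
        rw [Nat.mod_eq_of_lt (by omega), Nat.mod_eq_of_lt (by omega)] at hbb
        omega
      have hsub : A ∪ {(j + k) % n} ⊆ Ej n k w := by
        intro x hx
        rcases Finset.mem_union.mp hx with hx | hx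
        · rw [ihA x hx]
          exact mem_Ej.mpr ⟨0, by omega, by rw [Nat.add_zero, Nat.mod_eq_of_lt hwn]⟩
        · rw [Finset.mem_singleton.mp hx]
          refine mem_Ej.mpr ⟨k - a0, by omega, ?_⟩
          rw [← hwa, Nat.mod_add_mod, show j + a0 + (k - a0) = j + k from by omega]
      have hueq := ihB _ (by rw [verts_eq]; exact Finset.mem_range.mpr hun) huE
        ⟨_, Ej_mem_edges hwn, hsub⟩
      rw [hueq] at huE
      exact huE hwE

end CIHHelpers

/-- For `n ≥ 2k - 1 ≥ 3`, the cycle `C^(k)_n(k-1)` has infection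
number `2`. -/
theorem infectionNumber_cyclicInterval (n k : ℕ)
    (hk : 3 ≤ 2 * k - 1) (hn : 2 * k - 1 ≤ n) :
    (cyclicIntervalHypergraph n k).infectionNumber = 2 := by
  have hk2 : 2 ≤ k := by omega
  have hkn : k < n := by omega
  have hn0 : 0 < n := by omega
  have hn3 : 3 ≤ n := by omega
  have h2 : ∃ W : Finset ℕ,
      (cyclicIntervalHypergraph n k).IsInfectionSetM 1 W ∧ W.card = 2 := by
    refine ⟨{0, k - 1}, ⟨?_, ?_⟩, ?_⟩
    · intro x hx
      rw [verts_eq]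
      rcases Finset.mem_insert.mp hx with rfl | hx
      · exact Finset.mem_range.mpr hn0
      · rw [Finset.mem_singleton.mp hx]; exact Finset.mem_range.mpr (by omega)
    · intro v hv
      rw [verts_eq] at hv
      have hvn : v < n := Finset.mem_range.mp hv
      have := cover_lemma hk2 hn v 0 (by omega)
      rwa [Nat.add_zero, Nat.mod_eq_of_lt hvn] at this
    · rw [Finset.card_insert_of_notMem (by simp; omega), Finset.card_singleton]
  obtain ⟨W₂, hW₂, hcard₂⟩ := h2
  show FinHypergraph.infectionNumberM _ 1 = 2
  unfold FinHypergraph.infectionNumberM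
  apply le_antisymm
  · have hmem : (2 : ℕ) ∈ {m | ∃ W : Finset ℕ,
        (cyclicIntervalHypergraph n k).IsInfectionSetM 1 W ∧ W.card = m} :=
      ⟨W₂, hW₂, hcard₂⟩
    exact Nat.sInf_le hmem
  · have hmem : (2 : ℕ) ∈ {m | ∃ W : Finset ℕ,
        (cyclicIntervalHypergraph n k).IsInfectionSetM 1 W ∧ W.card = m} :=
      ⟨W₂, hW₂, hcard₂⟩
    apply le_csInf ⟨2, hmem⟩
    rintro b ⟨W, hW, rfl⟩
    by_contra hlt
    push_neg at hlt
    interval_cases h : W.card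
    · have hWe : W = ∅ := Finset.card_eq_zero.mp h
      subst hWe
      exact empty_no (hW.2 0 (by rw [verts_eq]; exact Finset.mem_range.mpr hn0))
    · obtain ⟨w, rfl⟩ := Finset.card_eq_one.mp h
      have h0 := single_no hk2 hn (hW.2 0 (by rw [verts_eq]; exact Finset.mem_range.mpr hn0))
      have h1 := single_no hk2 hn (hW.2 1 (by rw [verts_eq]; exact Finset.mem_range.mpr (by omega)))
      omega
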